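/- Let α_ℓ, k_ℓ, h₀ > 0 and T_∞ < T_i. The function T_ℓ(x,t) = T_i − ((T_i − T_∞)/(1 + k_ℓ/(h₀√(α_ℓ π))))·erfc(x/(2√(α_ℓ t))) defined for x > 0, t > 0 satisfies the heat equation ρ c_ℓ ∂_t T_ℓ = k_ℓ ∂_{xx} T_ℓ (with α_ℓ = k_ℓ/(ρ c_ℓ)), the convective boundary condition k_ℓ ∂_x T_ℓ(0,t) = (h₀/√t)(T_ℓ(0,t) − T_∞) for t > 0, and T_ℓ(x,t) → T_i as t → 0⁺ for each fixed x > 0. -/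

import Mathlib

open Real Filter Topology Set

noncomputable def erf (x : ℝ) : ℝ := (2 / Real.sqrt Real.pi) * ∫ u in (0:ℝ)..x, Real.exp (-u^2)

noncomputable def erfc (x : ℝ) : ℝ := 1 - erf x

open MeasureTheory

lemma hasDerivAt_erf (s : ℝ) :
    HasDerivAt erf (2 / Real.sqrt Real.pi * Real.exp (-s^2)) s := by
  have hc : Continuous fun u : ℝ => Real.exp (-u^2) := by continuity
  have h := intervalIntegral.integral_hasDerivAt_right
    (hc.intervalIntegrable 0 s) (hc.stronglyMeasurableAtFilter _ _) hc.continuousAt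
  exact h.const_mul _

lemma hasDerivAt_erfc (s : ℝ) :
    HasDerivAt erfc (-(2 / Real.sqrt Real.pi * Real.exp (-s^2))) s :=
  (hasDerivAt_erf s).const_sub 1

lemma erf_zero : erf 0 = 0 := by simp [erf]

lemma erfc_zero : erfc 0 = 1 := by simp [erfc, erf_zero]

lemma erf_tendsto : Tendsto erf atTop (𝓝 1) := by
  have hb : (0:ℝ) < 1 := one_pos
  have hInt : IntegrableOn (fun u : ℝ => Real.exp (-u^2)) (Ioi 0) := by
    have := (integrable_exp_neg_mul_sq hb).integrableOn (s := Ioi (0:ℝ))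
    simpa using this
  have h1 : Tendsto (fun s : ℝ => ∫ u in (0:ℝ)..s, Real.exp (-u^2)) atTop
      (𝓝 (∫ u in Ioi (0:ℝ), Real.exp (-u^2))) :=
    intervalIntegral_tendsto_integral_Ioi 0 hInt tendsto_id
  have h2 : (∫ u in Ioi (0:ℝ), Real.exp (-u^2)) = Real.sqrt Real.pi / 2 := by
    have := integral_gaussian_Ioi 1
    simpa using this
  rw [h2] at h1
  have h3 := h1.const_mul (2 / Real.sqrt Real.pi)
  have hπ : Real.sqrt Real.pi ≠ 0 := by positivity
  have : 2 / Real.sqrt Real.pi * (Real.sqrt Real.pi / 2) = 1 := by field_simp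
  rw [this] at h3
  exact h3.congr (fun s => rfl)

lemma erfc_tendsto : Tendsto erfc atTop (𝓝 0) := by
  have := (tendsto_const_nhds (x := (1:ℝ)) (f := atTop)).sub erf_tendsto
  exact (by simpa using this : Tendsto (fun x => 1 - erf x) atTop (𝓝 0))

theorem heat_transfer_solution_verification (αl kl h0 ρ cl Tinf Ti : ℝ)
    (hαl : 0 < αl) (hkl : 0 < kl) (hh0 : 0 < h0) (hρ : 0 < ρ) (hcl : 0 < cl)
    (hα : αl = kl / (ρ * cl)) (hT : Tinf < Ti)
    (Tl : ℝ → ℝ → ℝ)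
    (hTl : ∀ x t, Tl x t =
      Ti - (Ti - Tinf) / (1 + kl / (h0 * Real.sqrt (αl * Real.pi)))
        * erfc (x / (2 * Real.sqrt (αl * t)))) :
    (∀ x t, 0 < x → 0 < t →
      ρ * cl * deriv (fun τ => Tl x τ) t = kl * deriv (deriv (fun y => Tl y t)) x) ∧
    (∀ t, 0 < t →
      kl * deriv (fun y => Tl y t) 0 = h0 / Real.sqrt t * (Tl 0 t - Tinf)) ∧
    (∀ x, 0 < x →
      Tendsto (fun t => Tl x t) (nhdsWithin 0 (Set.Ioi 0)) (nhds Ti)) := by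
  set C : ℝ := (Ti - Tinf) / (1 + kl / (h0 * Real.sqrt (αl * Real.pi))) with hC
  have hπ : (0:ℝ) < Real.sqrt Real.pi := Real.sqrt_pos.mpr Real.pi_pos
  -- spatial first derivative, for any t > 0 and any y
  have hSx : ∀ t : ℝ, 0 < t → ∀ y : ℝ,
      HasDerivAt (fun y => Tl y t)
        (-(C * (-(2 / Real.sqrt Real.pi * Real.exp (-(y / (2 * Real.sqrt (αl * t)))^2))
            * (1 / (2 * Real.sqrt (αl * t)))))) y := by
    intro t ht y
    have hfun : (fun y => Tl y t)
        = fun y => Ti - C * erfc (y / (2 * Real.sqrt (αl * t))) := funext fun y => hTl y t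
    rw [hfun]
    have harg : HasDerivAt (fun y : ℝ => y / (2 * Real.sqrt (αl * t)))
        (1 / (2 * Real.sqrt (αl * t))) y := by
      simpa using (hasDerivAt_id y).div_const (2 * Real.sqrt (αl * t))
    exact (((hasDerivAt_erfc _).comp y harg).const_mul C).const_sub Ti
  -- the first spatial derivative as a function
  have hDx : ∀ t : ℝ, 0 < t → deriv (fun y => Tl y t)
      = fun y => C * (2 / Real.sqrt Real.pi)
          * Real.exp (-(y / (2 * Real.sqrt (αl * t)))^2) / (2 * Real.sqrt (αl * t)) := by
    intro t ht
    funext y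
    rw [(hSx t ht y).deriv]
    ring
  refine ⟨?_, ?_, ?_⟩
  · -- PDE
    intro x t hx ht
    have hS : (0:ℝ) < Real.sqrt (αl * t) := Real.sqrt_pos.mpr (by positivity)
    -- time derivative
    have hd : HasDerivAt (fun τ : ℝ => 2 * Real.sqrt (αl * τ))
        (2 * (1 / (2 * Real.sqrt (αl * t)) * (αl * 1))) t := by
      have hin : HasDerivAt (fun τ : ℝ => αl * τ) (αl * 1) t := (hasDerivAt_id t).const_mul αl
      exact (((Real.hasDerivAt_sqrt (by positivity)).comp t hin)).const_mul 2
    have hq : HasDerivAt (fun τ : ℝ => x / (2 * Real.sqrt (αl * τ)))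
        ((0 * (2 * Real.sqrt (αl * t)) - x * (2 * (1 / (2 * Real.sqrt (αl * t)) * (αl * 1))))
          / (2 * Real.sqrt (αl * t))^2) t :=
      (hasDerivAt_const t x).div hd (by positivity)
    have hTt : HasDerivAt (fun τ => Tl x τ)
        (-(C * (-(2 / Real.sqrt Real.pi * Real.exp (-(x / (2 * Real.sqrt (αl * t)))^2))
          * ((0 * (2 * Real.sqrt (αl * t)) - x * (2 * (1 / (2 * Real.sqrt (αl * t)) * (αl * 1))))
          / (2 * Real.sqrt (αl * t))^2)))) t := by
      have hfun : (fun τ => Tl x τ)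
          = fun τ => Ti - C * erfc (x / (2 * Real.sqrt (αl * τ))) := funext fun τ => hTl x τ
      rw [hfun]
      exact (((hasDerivAt_erfc _).comp t hq).const_mul C).const_sub Ti
    rw [hTt.deriv, hDx t ht]
    -- second spatial derivative
    have hE : HasDerivAt (fun y : ℝ => Real.exp (-(y / (2 * Real.sqrt (αl * t)))^2))
        (Real.exp (-(x / (2 * Real.sqrt (αl * t)))^2)
          * (-(2 * (x / (2 * Real.sqrt (αl * t)))^1 * (1 / (2 * Real.sqrt (αl * t)))))) x := by
      have h1 : HasDerivAt (fun y : ℝ => y / (2 * Real.sqrt (αl * t)))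
          (1 / (2 * Real.sqrt (αl * t))) x := by
        simpa using (hasDerivAt_id x).div_const (2 * Real.sqrt (αl * t))
      have h2 := ((h1.pow 2).neg)
      have h3 := (Real.hasDerivAt_exp _).comp x h2
      convert h3 using 1
      · rfl
      · rfl
      · rfl
      · simp only [Pi.pow_apply, Pi.neg_apply, Nat.cast_ofNat]
    have h2nd : HasDerivAt (fun y : ℝ => C * (2 / Real.sqrt Real.pi)
          * Real.exp (-(y / (2 * Real.sqrt (αl * t)))^2) / (2 * Real.sqrt (αl * t)))
        ((C * (2 / Real.sqrt Real.pi))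
          * (Real.exp (-(x / (2 * Real.sqrt (αl * t)))^2)
            * (-(2 * (x / (2 * Real.sqrt (αl * t)))^1 * (1 / (2 * Real.sqrt (αl * t))))))
          / (2 * Real.sqrt (αl * t))) x := by
      have := (hE.const_mul (C * (2 / Real.sqrt Real.pi))).div_const (2 * Real.sqrt (αl * t))
      convert this using 1 <;> ring
    rw [h2nd.deriv]
    have hkρ : ρ * cl * αl = kl := by rw [hα]; field_simp
    have hS0 : Real.sqrt (αl * t) ≠ 0 := ne_of_gt hS
    rw [← hkρ]
    ring
  · -- boundary condition
    intro t ht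
    have hS : (0:ℝ) < Real.sqrt (αl * t) := Real.sqrt_pos.mpr (by positivity)
    rw [hDx t ht, hTl 0 t]
    simp only [zero_div, erfc_zero]
    have hsp : Real.sqrt (αl * t) = Real.sqrt αl * Real.sqrt t := Real.sqrt_mul hαl.le t
    have hsπ : Real.sqrt (αl * Real.pi) = Real.sqrt αl * Real.sqrt Real.pi :=
      Real.sqrt_mul hαl.le _
    have hsa : (0:ℝ) < Real.sqrt αl := Real.sqrt_pos.mpr hαl
    have hst : (0:ℝ) < Real.sqrt t := Real.sqrt_pos.mpr ht
    have hden : (0:ℝ) < 1 + kl / (h0 * Real.sqrt (αl * Real.pi)) := by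
      have : (0:ℝ) < kl / (h0 * Real.sqrt (αl * Real.pi)) := by positivity
      linarith
    rw [hC, hsp, hsπ]
    rw [hsπ] at hden
    have h1 : Real.exp (-(0:ℝ)^2) = 1 := by norm_num
    rw [h1]
    have hden0 : (1 + kl / (h0 * (Real.sqrt αl * Real.sqrt Real.pi))) ≠ 0 := ne_of_gt hden
    field_simp
    ring
  · -- initial condition
    intro x hx
    have harg : Tendsto (fun t : ℝ => x / (2 * Real.sqrt (αl * t)))
        (nhdsWithin 0 (Set.Ioi 0)) atTop := by
      have hg : Tendsto (fun t : ℝ => 2 * Real.sqrt (αl * t))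
          (nhdsWithin 0 (Set.Ioi 0)) (nhdsWithin 0 (Set.Ioi 0)) := by
        apply tendsto_nhdsWithin_of_tendsto_nhds_of_eventually_within
        · have hc : Continuous fun t : ℝ => 2 * Real.sqrt (αl * t) := by continuity
          have := hc.tendsto 0
          simp only [mul_zero, Real.sqrt_zero] at this
          exact tendsto_nhdsWithin_of_tendsto_nhds (by simpa using this)
        · filter_upwards [self_mem_nhdsWithin] with t ht
          have : (0:ℝ) < t := ht
          have : (0:ℝ) < Real.sqrt (αl * t) := Real.sqrt_pos.mpr (by positivity)
          exact mem_Ioi.mpr (by linarith)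
      have hinv : Tendsto (fun t : ℝ => (2 * Real.sqrt (αl * t))⁻¹)
          (nhdsWithin 0 (Set.Ioi 0)) atTop := hg.inv_tendsto_nhdsGT_zero
      have := hinv.const_mul_atTop hx
      simpa [div_eq_mul_inv] using this
    have h1 : Tendsto (fun t => erfc (x / (2 * Real.sqrt (αl * t))))
        (nhdsWithin 0 (Set.Ioi 0)) (𝓝 0) := erfc_tendsto.comp harg
    have h2 : Tendsto (fun t => Ti - C * erfc (x / (2 * Real.sqrt (αl * t))))
        (nhdsWithin 0 (Set.Ioi 0)) (𝓝 (Ti - C * 0)) :=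
      tendsto_const_nhds.sub (tendsto_const_nhds.mul h1)
    simp only [mul_zero, sub_zero] at h2
    exact h2.congr (fun t => (hTl x t).symm)
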